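/- Let n be a positive integer, let X and Y be real symmetric n×n matrices with Y positive definite, and for j = 1,…,n let K_j be the n×2 complex matrix K_j = Y^{-1/2}[−(X+iY), Iₙ]·Pₙ·E_j, where E_j is the 2n×2 matrix whose rows are all zero except that rows 2j−1 and 2j form the 2×2 identity, and Pₙ is the permutation matrix with Pₙ(a₁,…,a_{2n})ᵀ = (a₁, a₃, …, a_{2n−1}, a₂, a₄, …, a_{2n})ᵀ. Then for all j ≠ k, the entrywise imaginary part of K_j† K_k is the 2×2 zero matrix. -/

import Mathlib

/-!
STATEMENT 4: For K_j = Y^{-1/2}·[−(X+iY), Iₙ]·Pₙ·E_j (the coupling matrix of the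
j-th oscillator in the cascade construction), Im(K_j† K_k) = 0 for all j ≠ k.
Here E_j is the 2n×2 matrix whose rows are zero except rows 2j−1, 2j (1-based;
0-based: rows 2j, 2j+1), which form the 2×2 identity, and Pₙ is the permutation
matrix with Pₙ(a₁,…,a_{2n})ᵀ = (a₁, a₃, …, a_{2n−1}, a₂, a₄, …, a_{2n})ᵀ.
The rows of Pₙ are indexed by `Fin n ⊕ Fin n` (the quadrature ordering
q₁,…,qₙ,p₁,…,pₙ) and its columns by `Fin (2*n)` (the interleaved ordering).
-/

open Matrix
open scoped MatrixOrder

noncomputable section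

/-- The matrix [−(X+iY), Iₙ] pre-multiplied by Y^{-1/2}, where Y^{-1/2} is the inverse
of the positive-definite square root of Y. -/
def couplingK {n : ℕ} (X Y : Matrix (Fin n) (Fin n) ℝ) (hY : Y.PosDef) :
    Matrix (Fin n) (Fin n ⊕ Fin n) ℂ :=
  ((CFC.sqrt Y)⁻¹).map Complex.ofReal *
    Matrix.fromCols (-(X.map Complex.ofReal + Complex.I • Y.map Complex.ofReal)) 1

/-- The permutation matrix Pₙ sending the interleaved vector (q₁,p₁,…,qₙ,pₙ)
(columns, indexed by `Fin (2*n)`) to the quadrature ordering (q₁,…,qₙ,p₁,…,pₙ)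
(rows, indexed by `Fin n ⊕ Fin n`): row `inl k` picks entry 2k (0-based),
row `inr k` picks entry 2k+1 (0-based). -/
def permP (n : ℕ) : Matrix (Fin n ⊕ Fin n) (Fin (2*n)) ℝ :=
  Matrix.of fun i j =>
    match i with
    | Sum.inl k => if (j : ℕ) = 2 * (k : ℕ) then 1 else 0
    | Sum.inr k => if (j : ℕ) = 2 * (k : ℕ) + 1 then 1 else 0

/-- The 2n×2 selection matrix E_j: all rows zero except rows 2j, 2j+1 (0-based),
which form the 2×2 identity. -/
def selE (n : ℕ) (j : Fin n) : Matrix (Fin (2*n)) (Fin 2) ℝ :=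
  Matrix.of fun i s => if (i : ℕ) = 2 * (j : ℕ) + (s : ℕ) then 1 else 0

/-- The n×2 coupling matrix K_j = Y^{-1/2}·[−(X+iY), Iₙ]·Pₙ·E_j of the j-th oscillator. -/
def oscK {n : ℕ} (X Y : Matrix (Fin n) (Fin n) ℝ) (hY : Y.PosDef) (j : Fin n) :
    Matrix (Fin n) (Fin 2) ℂ :=
  couplingK X Y hY * (permP n).map Complex.ofReal * (selE n j).map Complex.ofReal

-- PE entries
lemma PE_inl {n : ℕ} (j : Fin n) (a : Fin n) (s : Fin 2) :
    (permP n * selE n j) (Sum.inl a) s = if a = j ∧ s = 0 then 1 else 0 := by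
  rw [Matrix.mul_apply]
  rw [Finset.sum_eq_single (⟨2*(a:ℕ), by omega⟩ : Fin (2*n))]
  · simp only [permP, selE, Matrix.of_apply]
    have hs := s.isLt
    by_cases h : a = j ∧ s = 0
    · obtain ⟨h1, h2⟩ := h
      subst h1; subst h2; norm_num
    · rw [if_neg h, if_pos trivial, one_mul, if_neg]
      intro hc
      apply h
      constructor
      · have : (a:ℕ) = (j:ℕ) := by omega
        exact Fin.ext this
      · have : (s:ℕ) = 0 := by omega
        exact Fin.ext this
  · intro t _ ht
    simp only [permP, Matrix.of_apply]
    rw [if_neg, zero_mul]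
    intro hc
    exact ht (Fin.ext (by simpa using hc))
  · simp

lemma PE_inr {n : ℕ} (j : Fin n) (a : Fin n) (s : Fin 2) :
    (permP n * selE n j) (Sum.inr a) s = if a = j ∧ s = 1 then 1 else 0 := by
  rw [Matrix.mul_apply]
  rw [Finset.sum_eq_single (⟨2*(a:ℕ)+1, by omega⟩ : Fin (2*n))]
  · simp only [permP, selE, Matrix.of_apply]
    have hs := s.isLt
    by_cases h : a = j ∧ s = 1
    · obtain ⟨h1, h2⟩ := h
      subst h1; subst h2; norm_num
    · rw [if_neg h, if_pos trivial, one_mul, if_neg]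
      intro hc
      apply h
      constructor
      · exact Fin.ext (by omega)
      · exact Fin.ext (by omega)
  · intro t _ ht
    simp only [permP, Matrix.of_apply]
    rw [if_neg, zero_mul]
    intro hc
    exact ht (Fin.ext (by simpa using hc))
  · simp

lemma couplingK_inl {n : ℕ} (X Y : Matrix (Fin n) (Fin n) ℝ) (hY : Y.PosDef)
    (i j : Fin n) :
    couplingK X Y hY i (Sum.inl j) =
      -((((CFC.sqrt Y)⁻¹ * X) i j : ℝ) : ℂ)
        - Complex.I * ((((CFC.sqrt Y)⁻¹ * Y) i j : ℝ) : ℂ) := by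
  simp only [couplingK, Matrix.mul_apply, Matrix.fromCols_apply_inl, Matrix.map_apply,
    Matrix.neg_apply, Matrix.add_apply, Matrix.smul_apply, smul_eq_mul]
  push_cast
  rw [Finset.mul_sum, ← Finset.sum_neg_distrib, ← Finset.sum_sub_distrib]
  exact Finset.sum_congr rfl fun l _ => by ring

lemma couplingK_inr {n : ℕ} (X Y : Matrix (Fin n) (Fin n) ℝ) (hY : Y.PosDef)
    (i j : Fin n) :
    couplingK X Y hY i (Sum.inr j) = (((CFC.sqrt Y)⁻¹ i j : ℝ) : ℂ) := by
  simp only [couplingK, Matrix.mul_apply, Matrix.fromCols_apply_inr, Matrix.map_apply,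
    Matrix.one_apply]
  rw [Finset.sum_eq_single j] <;> simp +contextual

lemma oscK_apply {n : ℕ} (X Y : Matrix (Fin n) (Fin n) ℝ) (hY : Y.PosDef)
    (j : Fin n) (i : Fin n) (s : Fin 2) :
    oscK X Y hY j i s =
      if s = 0 then couplingK X Y hY i (Sum.inl j) else couplingK X Y hY i (Sum.inr j) := by
  have hmap : (permP n).map Complex.ofReal * (selE n j).map Complex.ofReal
      = (permP n * selE n j).map Complex.ofReal :=
    (Matrix.map_mul (f := Complex.ofRealHom)).symm
  rw [oscK, Matrix.mul_assoc, hmap, Matrix.mul_apply, Fintype.sum_sum_type]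
  simp only [Matrix.map_apply, PE_inl, PE_inr]
  have h1 : s = 0 ∨ s = 1 := by omega
  rcases h1 with hs | hs <;> subst hs <;>
    simp [apply_ite Complex.ofReal, mul_ite, Finset.sum_ite_eq']

theorem im_oscK_dag_oscK_eq_zero_of_ne
    (n : ℕ) (hn : 0 < n) (X Y : Matrix (Fin n) (Fin n) ℝ)
    (hX : X.IsSymm) (hYs : Y.IsSymm) (hY : Y.PosDef)
    (j k : Fin n) (hjk : j ≠ k) :
    ((oscK X Y hY j)ᴴ * oscK X Y hY k).map Complex.im = 0 := by
  set A := (CFC.sqrt Y)⁻¹ with hA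
  have hst : (CFC.sqrt Y)ᵀ = (CFC.sqrt Y) := by
    have h := (Matrix.nonneg_iff_posSemidef.mp (CFC.sqrt_nonneg Y)).1
    rw [Matrix.IsHermitian, Matrix.conjTranspose_eq_transpose_of_trivial] at h
    exact h
  have hAt : Aᵀ = A := by
    rw [hA, Matrix.transpose_nonsing_inv, hst]
  have hAA : A * A = Y⁻¹ := by
    rw [hA, ← Matrix.mul_inv_rev, CFC.sqrt_mul_sqrt_self Y (Matrix.nonneg_iff_posSemidef.mpr hY.posSemidef)]
  have hYdet : IsUnit Y.det := isUnit_iff_ne_zero.mpr hY.det_pos.ne'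
  have hAAY : A * (A * Y) = 1 := by
    rw [← Matrix.mul_assoc, hAA, Matrix.nonsing_inv_mul Y hYdet]
  have key1 : ∀ p q : Fin n, p ≠ q → ∑ i, A i p * (A * Y) i q = 0 := by
    intro p q hpq
    have h : ∑ i, A i p * (A * Y) i q = (Aᵀ * (A * Y)) p q := by
      simp [Matrix.mul_apply, Matrix.transpose_apply]
    rw [h, hAt, hAAY, Matrix.one_apply_ne hpq]
  have hAAX : A * (A * X) = Y⁻¹ * X := by
    rw [← Matrix.mul_assoc, hAA]
  have esum : ∀ M N : Matrix (Fin n) (Fin n) ℝ,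
      (Mᵀ * N) j k = ∑ i, M i j * N i k := by
    intro M N
    rw [Matrix.mul_apply]
    exact Finset.sum_congr rfl fun i _ => rfl
  have e1 : ∑ i, (A * X) i j * (A * Y) i k = X j k := by
    rw [← esum]
    rw [Matrix.transpose_mul, hAt, hX.eq, Matrix.mul_assoc, hAAY, Matrix.mul_one]
  have e2 : ∑ i, (A * Y) i j * (A * X) i k = X j k := by
    rw [← esum]
    rw [Matrix.transpose_mul, hAt, hYs.eq, Matrix.mul_assoc, hAAX,
      ← Matrix.mul_assoc, Matrix.mul_nonsing_inv Y hYdet, Matrix.one_mul]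
  ext s t
  fin_cases s <;> fin_cases t
  all_goals simp only [Matrix.map_apply, Matrix.mul_apply, Matrix.conjTranspose_apply,
      oscK_apply, couplingK_inl, couplingK_inr, Matrix.zero_apply, Complex.im_sum]
  all_goals norm_num
  all_goals simp only [← Matrix.mul_apply]
  · rw [Finset.sum_add_distrib, Finset.sum_neg_distrib, e1, e2, add_neg_cancel]
  · rw [← key1 k j (Ne.symm hjk)]
    exact Finset.sum_congr rfl fun i _ => mul_comm _ _
  · exact key1 j k hjk
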